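/- arXiv:1704.00484 — 2 statements merged into one kernel-verified Lean document; each statement's English description precedes it below -/
import Mathlib

section
/- Let u ∈ ℂ((z)) be a nonzero formal Laurent series and f(z) = z + a₂z² + a₃z³ + ⋯ a formal diffeomorphism tangent to the identity with f ≠ id. If u ∘ f = μ·u for some μ ∈ ℂ*, then μ = 1 and u is a constant, i.e., u ∈ ℂ*. -/
open PowerSeries Finset

/-- Composition of formal power series `f ∘ g` (intended for `g` with zero
constant term). -/
noncomputable def PowerSeries.comp (f g : PowerSeries ℂ) : PowerSeries ℂ :=
  PowerSeries.mk fun n =>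
    ∑ k ∈ Finset.range (n + 1), PowerSeries.coeff k f * PowerSeries.coeff n (g ^ k)

/-- Composition `u ∘ f` of a formal Laurent series `u` with a formal power
series `f` (intended for `f` of order one): writing `u = z^(ord u) · v` with
`v` a power series, `u ∘ f = f^(ord u) · (v ∘ f)`. -/
noncomputable def LaurentSeries.comp (u : LaurentSeries ℂ) (f : PowerSeries ℂ) :
    LaurentSeries ℂ :=
  (HahnSeries.ofPowerSeries ℤ ℂ f) ^ (u.order) *
    (HahnSeries.ofPowerSeries ℤ ℂ (PowerSeries.comp u.powerSeriesPart f))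

/-- A power series of the form `1 + c X^d + O(X^(d+1))` (low coefficients known). -/
def Low (d : ℕ) (c : ℂ) (p : PowerSeries ℂ) : Prop :=
  coeff 0 p = 1 ∧ (∀ j, 0 < j → j < d → coeff j p = 0) ∧ coeff d p = c

variable {d : ℕ} {c c' : ℂ} {p q : PowerSeries ℂ}

lemma low_one (hd : 0 < d) : Low d 0 (1 : PowerSeries ℂ) := by
  refine ⟨by simp, fun j hj _ => by simp [PowerSeries.coeff_one, hj.ne'], ?_⟩
  simp [PowerSeries.coeff_one, hd.ne']

lemma low_pair_sum (hd : 0 < d) (hp0 : coeff 0 p = 1)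
    (hpm : ∀ j, 0 < j → j < d → coeff j p = 0) (hpd : coeff d p = c) :
    coeff d (p * q) = coeff d q + c * coeff 0 q := by
  rw [PowerSeries.coeff_mul]
  rw [← Finset.sum_subset (s₁ := {((0:ℕ), d), (d, (0:ℕ))})]
  · rw [Finset.sum_pair (by simp [hd.ne'] : ((0:ℕ), d) ≠ (d, (0:ℕ))), hp0, hpd, one_mul]
  · intro x hx
    simp only [Finset.mem_insert, Finset.mem_singleton] at hx
    rcases hx with h | h <;> simp [h]
  · rintro ⟨i, k⟩ hik hnot
    rw [Finset.HasAntidiagonal.mem_antidiagonal] at hik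
    simp only [Finset.mem_insert, Finset.mem_singleton, Prod.mk.injEq, not_or] at hnot
    have hi : 0 < i := by
      rcases Nat.eq_zero_or_pos i with h | h
      · exfalso; exact hnot.1 ⟨h, by omega⟩
      · exact h
    have hid : i < d := by
      rcases lt_or_eq_of_le (le_of_add_le_left hik.le) with h | h
      · exact h
      · exfalso; exact hnot.2 ⟨h, by omega⟩
    rw [hpm i hi hid, zero_mul]

lemma low_mid_sum (hp0 : coeff 0 p = 1)
    (hpm : ∀ j, 0 < j → j < d → coeff j p = 0) {j : ℕ} (hj : 0 < j) (hjd : j < d) :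
    coeff j (p * q) = coeff j q := by
  rw [PowerSeries.coeff_mul]
  rw [Finset.sum_eq_single ((0:ℕ), j)]
  · rw [hp0, one_mul]
  · rintro ⟨i, k⟩ hik hne
    rw [Finset.HasAntidiagonal.mem_antidiagonal] at hik
    have hi : 0 < i := by
      rcases Nat.eq_zero_or_pos i with h | h
      · exfalso; apply hne; simp only [Prod.mk.injEq]; omega
      · exact h
    rw [hpm i hi (lt_of_le_of_lt (le_of_add_le_left hik.le) hjd), zero_mul]
  · intro h; exact absurd (Finset.HasAntidiagonal.mem_antidiagonal.mpr (by simp)) h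

lemma low_mul (hd : 0 < d) (hp : Low d c p) (hq : Low d c' q) : Low d (c + c') (p * q) := by
  obtain ⟨hp0, hpm, hpd⟩ := hp
  obtain ⟨hq0, hqm, hqd⟩ := hq
  refine ⟨?_, ?_, ?_⟩
  · rw [PowerSeries.coeff_mul]; simp [hp0, hq0]
  · intro j hj hjd
    rw [low_mid_sum hp0 hpm hj hjd, hqm j hj hjd]
  · rw [low_pair_sum hd hp0 hpm hpd, hqd, hq0, mul_one, add_comm]

lemma low_pow (hd : 0 < d) (hp : Low d c p) : ∀ k : ℕ, Low d (k * c) (p ^ k) := by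
  intro k
  induction k with
  | zero => simpa using low_one hd
  | succ k ih =>
      have h := low_mul hd ih hp
      rw [pow_succ]
      have : ((k:ℂ) * c + c) = ((k+1 : ℕ) : ℂ) * c := by push_cast; ring
      rwa [this] at h

lemma low_inv (hd : 0 < d) (hp : Low d c p) : Low d (-c) p⁻¹ := by
  obtain ⟨hp0, hpm, hpd⟩ := hp
  have hc0 : constantCoeff p ≠ 0 := by
    rw [← PowerSeries.coeff_zero_eq_constantCoeff_apply, hp0]; exact one_ne_zero
  have hmul : p * p⁻¹ = 1 := PowerSeries.mul_inv_cancel p hc0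
  have hi0 : coeff 0 p⁻¹ = 1 := by
    rw [PowerSeries.coeff_zero_eq_constantCoeff_apply, PowerSeries.constantCoeff_inv,
      ← PowerSeries.coeff_zero_eq_constantCoeff_apply, hp0, inv_one]
  have hmid : ∀ j, 0 < j → j < d → coeff j p⁻¹ = 0 := by
    intro j hj hjd
    have h1 : coeff j (p * p⁻¹) = 0 := by rw [hmul]; simp [PowerSeries.coeff_one, hj.ne']
    rwa [low_mid_sum hp0 hpm hj hjd] at h1
  refine ⟨hi0, hmid, ?_⟩
  have h1 : coeff d (p * p⁻¹) = 0 := by rw [hmul]; simp [PowerSeries.coeff_one, hd.ne']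
  rw [low_pair_sum hd hp0 hpm hpd, hi0, mul_one] at h1
  linear_combination h1
/-- Integer power of a power series with invertible constant term. -/
noncomputable def gz (g : PowerSeries ℂ) (n : ℤ) : PowerSeries ℂ :=
  if 0 ≤ n then g ^ n.toNat else g⁻¹ ^ (-n).toNat

lemma low_gz (hd : 0 < d) (hp : Low d c p) (n : ℤ) : Low d (n * c) (gz p n) := by
  unfold gz
  split_ifs with h
  · have h2 := low_pow hd hp n.toNat
    have : ((n.toNat : ℕ) : ℂ) = (n : ℂ) := by
      exact_mod_cast congrArg (Int.cast : ℤ → ℂ) (Int.toNat_of_nonneg h)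
    rwa [this] at h2
  · have h2 := low_pow hd (low_inv hd hp) (-n).toNat
    have h3 : (((-n).toNat : ℕ) : ℂ) = -(n : ℂ) := by
      push_neg at h
      exact_mod_cast congrArg (Int.cast : ℤ → ℂ) (Int.toNat_of_nonneg (by omega : 0 ≤ -n))
    rw [h3] at h2
    rwa [neg_mul_neg] at h2

lemma ofPS_zpow (hp0 : constantCoeff p ≠ 0) (n : ℤ) :
    (HahnSeries.ofPowerSeries ℤ ℂ p) ^ n = HahnSeries.ofPowerSeries ℤ ℂ (gz p n) := by
  rcases le_or_gt 0 n with h | h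
  · rw [gz, if_pos h]
    conv_lhs => rw [← Int.toNat_of_nonneg h]
    rw [zpow_natCast, map_pow]
  · rw [gz, if_neg (not_le.mpr h)]
    have hn : n = -(((-n).toNat : ℕ) : ℤ) := by omega
    conv_lhs => rw [hn]
    rw [zpow_neg, zpow_natCast, ← map_pow]
    refine inv_eq_of_mul_eq_one_right ?_
    rw [← map_mul, ← mul_pow, PowerSeries.mul_inv_cancel p hp0, one_pow, map_one]

lemma single_zpow (n : ℤ) :
    (HahnSeries.single (1 : ℤ) (1 : ℂ)) ^ n = HahnSeries.single n 1 := by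
  rcases le_or_gt 0 n with h | h
  · conv_lhs => rw [← Int.toNat_of_nonneg h]
    rw [zpow_natCast, HahnSeries.single_pow, one_pow, nsmul_eq_mul, mul_one,
      Int.toNat_of_nonneg h]
  · have hn : n = -(((-n).toNat : ℕ) : ℤ) := by omega
    have hk : (((-n).toNat : ℕ) : ℤ) = -n := Int.toNat_of_nonneg (by omega)
    conv_lhs => rw [hn]
    rw [zpow_neg, zpow_natCast, HahnSeries.single_pow, one_pow, nsmul_eq_mul, mul_one, hk]
    refine inv_eq_of_mul_eq_one_right ?_
    rw [HahnSeries.single_mul_single, neg_add_cancel, one_mul, HahnSeries.single_zero_one]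

/-- If `u ∈ ℂ((z))` is a nonzero formal Laurent series and
`f(z) = z + a₂z² + ⋯` is a formal diffeomorphism tangent to the identity with
`f ≠ id`, and if `u ∘ f = μ·u` for some `μ ∈ ℂ*`, then `μ = 1` and `u` is a
nonzero constant. -/
theorem laurent_eigen_constant
    (u : LaurentSeries ℂ) (hu : u ≠ 0)
    (f : PowerSeries ℂ) (hf0 : constantCoeff f = 0) (hf1 : coeff 1 f = 1)
    (hfne : f ≠ PowerSeries.X)
    (μ : ℂ) (hμ : μ ≠ 0) (h : u.comp f = μ • u) :
    μ = 1 ∧ ∃ c : ℂ, c ≠ 0 ∧ u = HahnSeries.single (0 : ℤ) c := by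
  classical
  -- the first coefficient (≥ 2) where `f` differs from `X`
  have hPex : ∃ m, 2 ≤ m ∧ coeff m f ≠ 0 := by
    by_contra hc
    push_neg at hc
    apply hfne
    ext k
    rcases k with _ | _ | k
    · rw [PowerSeries.coeff_zero_eq_constantCoeff_apply, hf0, PowerSeries.coeff_zero_X]
    · rw [hf1, PowerSeries.coeff_X, if_pos rfl]
    · rw [hc (k+2) (by omega), PowerSeries.coeff_X, if_neg (by omega)]
  set m := Nat.find hPex with hmdef
  obtain ⟨hm2, ha⟩ := Nat.find_spec hPex
  set a := coeff m f with hadef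
  set d := m - 1 with hddef
  have hd : 0 < d := by omega
  have hdm : d + 1 = m := by omega
  -- write f = X * g
  set g : PowerSeries ℂ := PowerSeries.mk fun j => coeff (j+1) f with hgdef
  have hfg : f = X * g := by
    ext k
    rcases k with _ | k
    · rw [PowerSeries.coeff_zero_eq_constantCoeff_apply, hf0,
        PowerSeries.coeff_zero_eq_constantCoeff_apply, map_mul, PowerSeries.constantCoeff_X,
        zero_mul]
    · rw [PowerSeries.coeff_succ_X_mul, hgdef, PowerSeries.coeff_mk]
  have hlow : Low d a g := by
    refine ⟨by rw [hgdef, PowerSeries.coeff_mk]; exact hf1, ?_, ?_⟩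
    · intro j hj hjd
      rw [hgdef, PowerSeries.coeff_mk]
      by_contra hne
      exact Nat.find_min hPex (m := j+1) (by omega) ⟨by omega, hne⟩
    · rw [hgdef, PowerSeries.coeff_mk, hdm]
  have hg0 : constantCoeff g ≠ 0 := by
    rw [← PowerSeries.coeff_zero_eq_constantCoeff_apply, hlow.1]; exact one_ne_zero
  set v := u.powerSeriesPart with hvdef
  have hv0 : coeff 0 v ≠ 0 := by
    rw [hvdef, LaurentSeries.powerSeriesPart_coeff]
    simpa using mt HahnSeries.coeff_order_eq_zero.mp hu
  set n := u.order with hndef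
  -- rewrite both sides of `h`
  have hof : HahnSeries.ofPowerSeries ℤ ℂ f
      = HahnSeries.single (1:ℤ) (1:ℂ) * HahnSeries.ofPowerSeries ℤ ℂ g := by
    rw [hfg, map_mul, HahnSeries.ofPowerSeries_X]
  have huv : HahnSeries.single n (1:ℂ) * HahnSeries.ofPowerSeries ℤ ℂ v = u :=
    u.single_order_mul_powerSeriesPart
  have hl : HahnSeries.single n (1:ℂ) *
        HahnSeries.ofPowerSeries ℤ ℂ (gz g n * PowerSeries.comp v f)
      = u.comp f := by
    rw [map_mul, ← mul_assoc, ← single_zpow n, ← ofPS_zpow hg0 n, ← mul_zpow, ← hof]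
    rfl
  have hr : HahnSeries.single n (1:ℂ) * HahnSeries.ofPowerSeries ℤ ℂ (μ • v) = μ • u := by
    rw [PowerSeries.smul_eq_C_mul, map_mul, HahnSeries.ofPowerSeries_C, mul_left_comm, huv,
      HahnSeries.C_mul_eq_smul]
  have key : gz g n * PowerSeries.comp v f = μ • v :=
    HahnSeries.ofPowerSeries_injective
      (mul_left_cancel₀ (HahnSeries.single_ne_zero one_ne_zero)
        (by rw [hl, hr]; exact h))
  have hPlow : Low d ((n : ℂ) * a) (gz g n) := low_gz hd hlow n
  -- coefficients of the composition
  have hw0 : coeff 0 (PowerSeries.comp v f) = coeff 0 v := by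
    rw [PowerSeries.comp, PowerSeries.coeff_mk]
    simp
  have hcomp : ∀ k : ℕ, (∀ j, 0 < j → j < k → coeff j v = 0) →
      coeff (k + d) (PowerSeries.comp v f)
        = coeff (k + d) v + coeff k v * ((k : ℂ) * a) := by
    intro k hvan
    rw [PowerSeries.comp, PowerSeries.coeff_mk]
    have hfp : ∀ t : ℕ, t ≤ k + d → coeff (k + d) (f ^ t) = coeff (k + d - t) (g ^ t) := by
      intro t ht
      rw [hfg, mul_pow, PowerSeries.coeff_X_pow_mul', if_pos ht]
    rw [← Finset.sum_subset (s₁ := {k, k + d})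
      (by intro x hx
          simp only [Finset.mem_insert, Finset.mem_singleton] at hx
          rcases hx with rfl | rfl <;> rw [Finset.mem_range] <;> omega)
      (by rintro t htr htn
          rw [Finset.mem_range] at htr
          simp only [Finset.mem_insert, Finset.mem_singleton, not_or] at htn
          have ht : t ≤ k + d := by omega
          rw [hfp t ht]
          rcases lt_or_gt_of_ne htn.1 with hlt | hgt
          · rcases Nat.eq_zero_or_pos t with rfl | htpos
            · rw [pow_zero]
              have h0 : k + d - 0 ≠ 0 := by omega
              simp only [PowerSeries.coeff_one, Nat.sub_zero]
              rw [if_neg (by omega : ¬ k + d = 0), mul_zero]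
            · rw [hvan t htpos hlt, zero_mul]
          · have h1 : 0 < k + d - t := by omega
            have h2 : k + d - t < d := by omega
            rw [(low_pow hd hlow t).2.1 _ h1 h2, mul_zero])]
    rw [Finset.sum_pair (by omega : k ≠ k + d)]
    rw [hfp k (by omega), hfp (k + d) le_rfl]
    have e1 : k + d - k = d := by omega
    have e2 : k + d - (k + d) = 0 := by omega
    rw [e1, e2, (low_pow hd hlow k).2.2, (low_pow hd hlow (k+d)).1, mul_one, add_comm]
  -- μ = 1
  have hkey0 : coeff 0 (gz g n * PowerSeries.comp v f) = coeff 0 v := by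
    rw [PowerSeries.coeff_mul]
    simp [hPlow.1, hw0]
  have hμ1 : μ = 1 := by
    have := congrArg (coeff 0) key
    rw [hkey0, PowerSeries.coeff_smul, smul_eq_mul] at this
    have h3 : (μ - 1) * coeff 0 v = 0 := by linear_combination -this
    rcases mul_eq_zero.mp h3 with h4 | h4
    · linear_combination h4
    · exact absurd h4 hv0
  -- order of u is zero
  have hwd : coeff d (PowerSeries.comp v f) = coeff d v := by
    have := hcomp 0 (by intro j hj hj0; omega)
    simpa using this
  have hn0 : n = 0 := by
    have hc := congrArg (coeff d) key
    rw [low_pair_sum hd hPlow.1 hPlow.2.1 hPlow.2.2, hwd, hw0,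
      PowerSeries.coeff_smul, smul_eq_mul, hμ1, one_mul] at hc
    have h3 : (n : ℂ) * a * coeff 0 v = 0 := by linear_combination hc
    rcases mul_eq_zero.mp h3 with h4 | h4
    · rcases mul_eq_zero.mp h4 with h5 | h5
      · exact_mod_cast h5
      · exact absurd h5 ha
    · exact absurd h4 hv0
  -- now the composition equation is `comp v f = v`
  have hgz1 : gz g n = 1 := by
    rw [hn0, gz, if_pos le_rfl]
    simp
  have keyv : PowerSeries.comp v f = v := by
    have := key
    rw [hgz1, one_mul, hμ1, one_smul] at this
    exact this
  -- v is constant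
  have hvan : ∀ k, 0 < k → coeff k v = 0 := by
    intro k
    induction k using Nat.strong_induction_on with
    | _ k IH =>
      intro hk
      have h1 := hcomp k (fun j hj hjk => IH j hjk hj)
      rw [keyv] at h1
      have h3 : coeff k v * ((k : ℂ) * a) = 0 := by linear_combination -h1
      rcases mul_eq_zero.mp h3 with h4 | h4
      · exact h4
      · rcases mul_eq_zero.mp h4 with h5 | h5
        · exfalso; exact hk.ne' (by exact_mod_cast h5)
        · exact absurd h5 ha
  refine ⟨hμ1, coeff 0 v, hv0, ?_⟩
  have hvC : v = PowerSeries.C (coeff 0 v) := by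
    ext k
    rcases Nat.eq_zero_or_pos k with rfl | hk
    · simp
    · rw [hvan k hk, PowerSeries.coeff_C, if_neg hk.ne']
    
  rw [← huv, hn0, HahnSeries.single_zero_one, one_mul, hvC, HahnSeries.ofPowerSeries_C,
    HahnSeries.C_apply]
  simp
end

section
/- Every nontrivial abelian subgroup of Diff̂(ℂ,0)₁ consists of elements all having the same order of tangency to the identity. That is, if G ≤ Diff̂(ℂ,0)₁ is abelian and f, g ∈ G are both different from the identity, with f(z) = z + a z^{k+1} + O(z^{k+2}) (a≠0) and g(z) = z + b z^{l+1} + O(z^{l+2}) (b≠0), then k = l. -/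
open PowerSeries

open Finset in
/-- Key coefficient computation for powers of `g = z + b z^{l+1} + ⋯`. -/
lemma key_pow_coeff (g : PowerSeries ℂ) (l : ℕ) (hl : 1 ≤ l)
    (hg0 : constantCoeff g = 0) (hg1 : coeff 1 g = 1)
    (hgmid : ∀ j : ℕ, 2 ≤ j → j ≤ l → coeff j g = 0) :
    ∀ m : ℕ, (∀ n : ℕ, n ≠ m → n < m + l → coeff n (g ^ m) = 0) ∧
      coeff m (g ^ m) = 1 ∧
      coeff (m + l) (g ^ m) = m * coeff (l + 1) g := by
  have hg0' : coeff 0 g = 0 := by rwa [PowerSeries.coeff_zero_eq_constantCoeff]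
  intro m
  induction m with
  | zero =>
    refine ⟨fun n hn _ => ?_, by simp, ?_⟩
    · simp [PowerSeries.coeff_one, hn]
    · have : l ≠ 0 := by omega
      simp [PowerSeries.coeff_one, this]
  | succ m ih =>
    obtain ⟨ihA, ihB, ihC⟩ := ih
    refine ⟨?_, ?_, ?_⟩
    · -- part A
      intro n hn hn2
      rw [pow_succ, PowerSeries.coeff_mul]
      refine Finset.sum_eq_zero fun p hp => ?_
      rw [Finset.HasAntidiagonal.mem_antidiagonal] at hp
      rcases Nat.eq_zero_or_pos p.2 with h2 | h2
      · rw [h2, hg0', mul_zero]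
      · by_cases h1 : p.1 = m
        · have h2' : 2 ≤ p.2 := by omega
          rw [hgmid p.2 h2' (by omega), mul_zero]
        · rw [ihA p.1 h1 (by omega), zero_mul]
    · -- part B
      rw [pow_succ, PowerSeries.coeff_mul]
      rw [Finset.sum_eq_single_of_mem (m, 1) (by rw [Finset.HasAntidiagonal.mem_antidiagonal])]
      · rw [ihB, hg1, one_mul]
      · intro p hp hne
        rw [Finset.HasAntidiagonal.mem_antidiagonal] at hp
        rcases Nat.eq_zero_or_pos p.2 with h2 | h2
        · rw [h2, hg0', mul_zero]
        · by_cases h1 : p.1 = m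
          · exact absurd (Prod.ext h1 (by omega)) hne
          · rw [ihA p.1 h1 (by omega), zero_mul]
    · -- part C
      have harith : m + 1 + l = m + (l + 1) := by omega
      rw [pow_succ, PowerSeries.coeff_mul]
      rw [Finset.sum_eq_add_of_mem (m, l + 1) (m + l, 1)
          (by rw [Finset.HasAntidiagonal.mem_antidiagonal]; omega)
          (by rw [Finset.HasAntidiagonal.mem_antidiagonal]; omega)
          (by intro h; have := congrArg Prod.snd h; simp at this; omega)]
      · rw [ihB, ihC, hg1, one_mul, mul_one]
        push_cast
        ring
      · intro p hp hne
        rw [Finset.HasAntidiagonal.mem_antidiagonal] at hp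
        rcases Nat.eq_zero_or_pos p.2 with h2 | h2
        · rw [h2, hg0', mul_zero]
        · by_cases h1 : p.1 = m
          · exact absurd (Prod.ext h1 (by omega)) hne.1
          · by_cases h1' : p.1 = m + l
            · exact absurd (Prod.ext h1' (by omega)) hne.2
            · rw [ihA p.1 h1 (by omega), zero_mul]

open Finset in
/-- Coefficient of `z^{k+l+1}` in `f ∘ g` when `f = z + a z^{k+1} + ⋯`,
`g = z + b z^{l+1} + ⋯`. -/
lemma comp_coeff_key (k l : ℕ) (hk : 1 ≤ k) (hl : 1 ≤ l)
    (f g : PowerSeries ℂ)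
    (hf0 : constantCoeff f = 0) (hf1 : coeff 1 f = 1)
    (hfmid : ∀ j : ℕ, 2 ≤ j → j ≤ k → coeff j f = 0)
    (hg0 : constantCoeff g = 0) (hg1 : coeff 1 g = 1)
    (hgmid : ∀ j : ℕ, 2 ≤ j → j ≤ l → coeff j g = 0) :
    coeff (k + l + 1) (PowerSeries.comp f g)
      = coeff (k + l + 1) g
        + coeff (k + 1) f * ((k + 1 : ℕ) * coeff (l + 1) g)
        + coeff (k + l + 1) f := by
  have key := key_pow_coeff g l hl hg0 hg1 hgmid
  set N := k + l + 1 with hN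
  have hf0' : coeff 0 f = 0 := by rwa [PowerSeries.coeff_zero_eq_constantCoeff]
  rw [PowerSeries.comp, PowerSeries.coeff_mk]
  have hsub : ({1, k + 1, N} : Finset ℕ) ⊆ Finset.range (N + 1) := by
    intro x hx
    simp only [Finset.mem_insert, Finset.mem_singleton] at hx
    rw [Finset.mem_range]
    omega
  rw [← Finset.sum_subset hsub]
  · have h1 : (1 : ℕ) ∉ ({k + 1, N} : Finset ℕ) := by
      simp only [Finset.mem_insert, Finset.mem_singleton]; omega
    have h2 : (k + 1 : ℕ) ∉ ({N} : Finset ℕ) := by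
      simp only [Finset.mem_singleton]; omega
    rw [show ({1, k + 1, N} : Finset ℕ) = insert 1 {k + 1, N} from rfl,
      Finset.sum_insert h1,
      show ({k + 1, N} : Finset ℕ) = insert (k + 1) {N} from rfl,
      Finset.sum_insert h2, Finset.sum_singleton]
    rw [hf1, pow_one, one_mul]
    rw [show N = (k + 1) + l from by omega] 
    rw [(key (k + 1)).2.2, (key ((k+1) + l)).2.1, mul_one]
    push_cast
    ring
  · intro j hj hnot
    simp only [Finset.mem_insert, Finset.mem_singleton] at hnot
    push_neg at hnot
    rw [Finset.mem_range] at hj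
    by_cases h0 : j = 0
    · rw [h0, hf0', zero_mul]
    · by_cases hle : j ≤ k
      · rw [hfmid j (by omega) hle, zero_mul]
      · rw [(key j).1 N (by omega) (by omega), mul_zero]

/-- In an abelian subgroup of `Diff̂(ℂ,0)₁`, all nontrivial elements have the
same order of tangency to the identity: if `f = z + a z^{k+1} + O(z^{k+2})` and
`g = z + b z^{l+1} + O(z^{l+2})` (`a, b ≠ 0`) are tangent to the identity and
commute, then `k = l`. -/
theorem same_tangency_order_of_commute
    (k l : ℕ) (hk : 1 ≤ k) (hl : 1 ≤ l)
    (a b : ℂ) (ha : a ≠ 0) (hb : b ≠ 0)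
    (f g : PowerSeries ℂ)
    (hf0 : constantCoeff f = 0) (hf1 : coeff 1 f = 1)
    (hfmid : ∀ j : ℕ, 2 ≤ j → j ≤ k → coeff j f = 0)
    (hfk : coeff (k + 1) f = a)
    (hg0 : constantCoeff g = 0) (hg1 : coeff 1 g = 1)
    (hgmid : ∀ j : ℕ, 2 ≤ j → j ≤ l → coeff j g = 0)
    (hgl : coeff (l + 1) g = b)
    (hcomm : PowerSeries.comp f g = PowerSeries.comp g f) :
    k = l := by
  have H1 := comp_coeff_key k l hk hl f g hf0 hf1 hfmid hg0 hg1 hgmid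
  have H2 := comp_coeff_key l k hl hk g f hg0 hg1 hgmid hf0 hf1 hfmid
  rw [show l + k + 1 = k + l + 1 from by omega] at H2
  rw [hcomm, H2, hfk, hgl] at H1
  have hab : a * b ≠ 0 := mul_ne_zero ha hb
  have h : (a * b) * ((l : ℂ) + 1) = (a * b) * ((k : ℂ) + 1) := by
    push_cast at H1 ⊢
    linear_combination H1
  have hkl := mul_left_cancel₀ hab h
  have : (l : ℂ) = k := add_right_cancel hkl
  exact_mod_cast this.symm
end
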